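/- Let A_1, …, A_m ∈ ℝ^{n×n}, let d ≥ 1 be an integer, and let γ ≥ 0. Suppose there exist a homogeneous polynomial p ∈ ℝ[x_1,…,x_n] of degree 2d, finite sets B^{(0)}_1, …, B^{(0)}_{t_0} ⊆ ℕ^n_d and, for each i = 1,…,m, finite sets B^{(i)}_1, …, B^{(i)}_{t_i} ⊆ ℕ^n_d, together with symmetric positive semidefinite matrices Q^{(0)}_k (rows and columns indexed by B^{(0)}_k) and Q^{(i)}_k (indexed by B^{(i)}_k), such that p(x) − (x_1² + ⋯ + x_n²)^d = Σ_{k=1}^{t_0} (x^{B^{(0)}_k})ᵀ Q^{(0)}_k x^{B^{(0)}_k} and, for each i, γ^{2d} p(x) − p(A_i x) = Σ_{k=1}^{t_i} (x^{B^{(i)}_k})ᵀ Q^{(i)}_k x^{B^{(i)}_k}. Then ρ(𝒜) ≤ γ. -/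

import Mathlib

open MvPolynomial Filter
open scoped Topology

/-- Operator norm of a real matrix induced by the Euclidean norm on `ℝ^n`. -/
noncomputable def opNorm {n : ℕ} (A : Matrix (Fin n) (Fin n) ℝ) : ℝ :=
  ‖LinearMap.toContinuousLinearMap (Matrix.toEuclideanLin A)‖

/-- Joint spectral radius of a family of matrices. -/
noncomputable def jsr {n m : ℕ} (A : Fin m → Matrix (Fin n) (Fin n) ℝ) : ℝ :=
  Filter.limsup
    (fun k : ℕ => ⨆ σ : Fin k → Fin m,
      opNorm ((List.ofFn fun j => A (σ j)).prod) ^ (1 / (k : ℝ)))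
    Filter.atTop

/-- The polynomial `p(Ax)`, obtained by substituting the linear forms `(Ax)_i` for `x_i`. -/
noncomputable def polyComp {n : ℕ} (p : MvPolynomial (Fin n) ℝ)
    (A : Matrix (Fin n) (Fin n) ℝ) : MvPolynomial (Fin n) ℝ :=
  MvPolynomial.aeval (fun i => ∑ j, MvPolynomial.C (A i j) * MvPolynomial.X j) p

/-- The polynomial `(x^B)ᵀ Q x^B = Σ_{β,γ ∈ B} Q_{βγ} x^{β+γ}` for a finite set `B` of
exponent vectors and a matrix `Q` indexed by `B`. -/
noncomputable def gramPoly {n : ℕ} (B : Finset (Fin n →₀ ℕ)) (Q : Matrix ↥B ↥B ℝ) :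
    MvPolynomial (Fin n) ℝ :=
  ∑ u : ↥B, ∑ v : ↥B, MvPolynomial.monomial (u.1 + v.1) (Q u v)

lemma gramPoly_eval_nonneg {n : ℕ} (B : Finset (Fin n →₀ ℕ)) (Q : Matrix ↥B ↥B ℝ)
    (hQ : Q.PosSemidef) (x : Fin n → ℝ) : 0 ≤ MvPolynomial.eval x (gramPoly B Q) := by
  classical
  set w : ↥B → ℝ := fun u => (u.1).prod fun i e => x i ^ e with hw
  have h := hQ.dotProduct_mulVec_nonneg w
  have heval : MvPolynomial.eval x (gramPoly B Q) = ∑ u : ↥B, ∑ v : ↥B, w u * (Q u v * w v) := by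
    rw [gramPoly]
    rw [map_sum]
    refine Finset.sum_congr rfl fun u _ => ?_
    rw [map_sum]
    refine Finset.sum_congr rfl fun v _ => ?_
    rw [MvPolynomial.eval_monomial,
      Finsupp.prod_add_index (fun a _ => pow_zero (x a)) (fun a _ e1 e2 => pow_add (x a) e1 e2)]
    ring
  rw [heval]
  simpa [dotProduct, Matrix.mulVec, Finset.mul_sum] using h

lemma eval_polyComp {n : ℕ} (p : MvPolynomial (Fin n) ℝ) (M : Matrix (Fin n) (Fin n) ℝ)
    (x : Fin n → ℝ) : MvPolynomial.eval x (polyComp p M) = MvPolynomial.eval (M.mulVec x) p := by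
  have key : ∀ (q : MvPolynomial (Fin n) ℝ) (y : Fin n → ℝ),
      MvPolynomial.aeval y q = MvPolynomial.eval y q := fun q y => by
    rw [← MvPolynomial.coe_aeval_eq_eval]; rfl
  rw [polyComp, ← key _ x, MvPolynomial.comp_aeval_apply, key]
  have : (fun i => (MvPolynomial.aeval x) (∑ j, MvPolynomial.C (M i j) * MvPolynomial.X j))
      = M.mulVec x := by
    funext i
    simp [Matrix.mulVec, dotProduct]
  rw [this]

lemma opNorm_le_of_sq {n : ℕ} (M : Matrix (Fin n) (Fin n) ℝ) (c : ℝ) (hc : 0 ≤ c)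
    (hM : ∀ x : Fin n → ℝ, (∑ j, (M.mulVec x) j ^ 2) ≤ c ^ 2 * ∑ j, x j ^ 2) : opNorm M ≤ c := by
  rw [opNorm]
  apply ContinuousLinearMap.opNorm_le_bound _ hc
  intro y
  have h1 : ‖(LinearMap.toContinuousLinearMap (Matrix.toEuclideanLin M)) y‖
      = Real.sqrt (∑ j, (M.mulVec (fun i => y i)) j ^ 2) := by
    rw [EuclideanSpace.norm_eq]
    congr 1
    refine Finset.sum_congr rfl fun j _ => ?_
    rw [Real.norm_eq_abs, sq_abs]
    rfl
  have h2 : ‖y‖ = Real.sqrt (∑ j, (y j) ^ 2) := by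
    rw [EuclideanSpace.norm_eq]
    congr 1
    refine Finset.sum_congr rfl fun j _ => ?_
    rw [Real.norm_eq_abs, sq_abs]
  rw [h1, h2]
  calc Real.sqrt (∑ j, (M.mulVec (fun i => y i)) j ^ 2)
      ≤ Real.sqrt (c ^ 2 * ∑ j, (y j) ^ 2) := Real.sqrt_le_sqrt (hM _)
    _ = c * Real.sqrt (∑ j, (y j) ^ 2) := by
        rw [Real.sqrt_mul (sq_nonneg c), Real.sqrt_sq hc]

/-- Sparse SOS certificates (sums of clique-indexed PSD Gram forms) for
`p(x) - ‖x‖₂^{2d}` and `γ^{2d} p(x) - p(Aᵢx)` certify `ρ(𝒜) ≤ γ`. -/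
theorem stmt4 {n m : ℕ} (A : Fin m → Matrix (Fin n) (Fin n) ℝ) (d : ℕ) (hd : 1 ≤ d)
    (γ : ℝ) (hγ : 0 ≤ γ)
    (p : MvPolynomial (Fin n) ℝ) (hp : p.IsHomogeneous (2 * d))
    (t0 : ℕ) (B0 : Fin t0 → Finset (Fin n →₀ ℕ))
    (hB0 : ∀ (k : Fin t0), ∀ α ∈ B0 k, (∑ j, α j) = d)
    (ti : Fin m → ℕ) (Bi : (i : Fin m) → Fin (ti i) → Finset (Fin n →₀ ℕ))
    (hBi : ∀ (i : Fin m) (k : Fin (ti i)), ∀ α ∈ Bi i k, (∑ j, α j) = d)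
    (Q0 : (k : Fin t0) → Matrix ↥(B0 k) ↥(B0 k) ℝ)
    (hQ0 : ∀ k, (Q0 k).PosSemidef)
    (Qi : (i : Fin m) → (k : Fin (ti i)) → Matrix ↥(Bi i k) ↥(Bi i k) ℝ)
    (hQi : ∀ i k, (Qi i k).PosSemidef)
    (heq0 : p - (∑ j, MvPolynomial.X j ^ 2) ^ d = ∑ k, gramPoly (B0 k) (Q0 k))
    (heqi : ∀ i, γ ^ (2 * d) • p - polyComp p (A i) = ∑ k, gramPoly (Bi i k) (Qi i k)) :
    jsr A ≤ γ := by
  classical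
  have hd0 : (d : ℝ) ≠ 0 := Nat.cast_ne_zero.mpr (by omega)
  -- notation
  set s : (Fin n → ℝ) → ℝ := fun x => ∑ j, x j ^ 2 with hs
  have hs0 : ∀ x, 0 ≤ s x := fun x => Finset.sum_nonneg fun j _ => sq_nonneg _
  -- lower bound : s x ^ d ≤ p(x)
  have hlow : ∀ x : Fin n → ℝ, s x ^ d ≤ MvPolynomial.eval x p := by
    intro x
    have h1 := congrArg (MvPolynomial.eval x) heq0
    rw [map_sub, map_pow, map_sum] at h1
    simp only [map_pow, MvPolynomial.eval_X] at h1
    have h2 : 0 ≤ MvPolynomial.eval x (∑ k, gramPoly (B0 k) (Q0 k)) := by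
      rw [map_sum]
      exact Finset.sum_nonneg fun k _ => gramPoly_eval_nonneg _ _ (hQ0 k) x
    rw [← h1] at h2
    rw [hs]
    linarith
  have hp0 : ∀ x : Fin n → ℝ, 0 ≤ MvPolynomial.eval x p :=
    fun x => le_trans (pow_nonneg (hs0 x) d) (hlow x)
  -- step inequality
  have hstep : ∀ (i : Fin m) (x : Fin n → ℝ),
      MvPolynomial.eval ((A i).mulVec x) p ≤ γ ^ (2 * d) * MvPolynomial.eval x p := by
    intro i x
    have h1 := congrArg (MvPolynomial.eval x) (heqi i)
    rw [map_sub, MvPolynomial.smul_eval, eval_polyComp] at h1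
    have h2 : 0 ≤ MvPolynomial.eval x (∑ k, gramPoly (Bi i k) (Qi i k)) := by
      rw [map_sum]
      exact Finset.sum_nonneg fun k _ => gramPoly_eval_nonneg _ _ (hQi i k) x
    rw [← h1] at h2
    linarith
  -- iterated inequality
  have hiter : ∀ (L : List (Fin m)) (x : Fin n → ℝ),
      MvPolynomial.eval ((L.map A).prod.mulVec x) p
        ≤ (γ ^ (2 * d)) ^ L.length * MvPolynomial.eval x p := by
    intro L
    induction L with
    | nil => intro x; simp [Matrix.one_mulVec]
    | cons i L ih =>
      intro x
      have h1 : ((i :: L).map A).prod.mulVec x = (A i).mulVec (((L.map A).prod).mulVec x) := by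
        rw [List.map_cons, List.prod_cons, ← Matrix.mulVec_mulVec]
      rw [h1]
      calc MvPolynomial.eval ((A i).mulVec (((L.map A).prod).mulVec x)) p
          ≤ γ ^ (2 * d) * MvPolynomial.eval (((L.map A).prod).mulVec x) p := hstep i _
        _ ≤ γ ^ (2 * d) * ((γ ^ (2 * d)) ^ L.length * MvPolynomial.eval x p) :=
            mul_le_mul_of_nonneg_left (ih x) (pow_nonneg hγ _)
        _ = (γ ^ (2 * d)) ^ (i :: L).length * MvPolynomial.eval x p := by
            rw [List.length_cons, pow_succ]; ring
  -- upper bound : p(x) ≤ C0 * s x ^ d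
  set C0 : ℝ := ∑ α ∈ p.support, |p.coeff α| with hC0
  have hup : ∀ x : Fin n → ℝ, MvPolynomial.eval x p ≤ C0 * s x ^ d := by
    intro x
    have hxb : ∀ i, |x i| ≤ Real.sqrt (s x) := by
      intro i
      rw [← Real.sqrt_sq_eq_abs]
      exact Real.sqrt_le_sqrt (Finset.single_le_sum (fun j _ => sq_nonneg (x j))
        (Finset.mem_univ i))
    rw [MvPolynomial.eval_eq]
    calc ∑ α ∈ p.support, p.coeff α * ∏ i ∈ α.support, x i ^ α i
        ≤ ∑ α ∈ p.support, |p.coeff α| * s x ^ d := by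
          refine Finset.sum_le_sum fun α hα => ?_
          have hdeg : ∑ i ∈ α.support, α i = 2 * d := by
            have h := hp (MvPolynomial.mem_support_iff.mp hα)
            have h2 : α.degree = Finsupp.weight 1 α := by rw [Finsupp.degree_eq_weight_one]; rfl
            rw [Finsupp.degree] at h2
            exact h2.trans h
          calc p.coeff α * ∏ i ∈ α.support, x i ^ α i
              ≤ |p.coeff α * ∏ i ∈ α.support, x i ^ α i| := le_abs_self _
            _ = |p.coeff α| * ∏ i ∈ α.support, |x i| ^ α i := by
                rw [abs_mul, Finset.abs_prod]
                congr 1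
                exact Finset.prod_congr rfl fun i _ => (abs_pow _ _)
            _ ≤ |p.coeff α| * ∏ i ∈ α.support, Real.sqrt (s x) ^ α i := by
                refine mul_le_mul_of_nonneg_left ?_ (abs_nonneg _)
                exact Finset.prod_le_prod (fun i _ => pow_nonneg (abs_nonneg _) _)
                  (fun i _ => pow_le_pow_left₀ (abs_nonneg _) (hxb i) _)
            _ = |p.coeff α| * Real.sqrt (s x) ^ (∑ i ∈ α.support, α i) := by
                rw [Finset.prod_pow_eq_pow_sum]
            _ = |p.coeff α| * s x ^ d := by
                rw [hdeg, pow_mul, Real.sq_sqrt (hs0 x)]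
      _ = C0 * s x ^ d := by rw [← Finset.sum_mul]
  -- constants
  set C : ℝ := max C0 1 with hC
  have hC1 : (1 : ℝ) ≤ C := le_max_right _ _
  have hCpos : (0 : ℝ) < C := lt_of_lt_of_le one_pos hC1
  have hup' : ∀ x, MvPolynomial.eval x p ≤ C * s x ^ d := fun x =>
    (hup x).trans (mul_le_mul_of_nonneg_right (le_max_left _ _) (pow_nonneg (hs0 x) d))
  set r : ℝ := C ^ (1 / (2 * (d : ℝ))) with hr
  have hrpos : (0 : ℝ) < r := Real.rpow_pos_of_pos hCpos _
  have hr1 : (1 : ℝ) ≤ r := Real.one_le_rpow hC1 (by positivity)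
  have hrpow : r ^ (2 * d) = C := by
    rw [hr, ← Real.rpow_natCast (C ^ (1 / (2 * (d : ℝ)))) (2 * d), ← Real.rpow_mul hCpos.le]
    rw [show (1 / (2 * (d : ℝ))) * ((2 * d : ℕ) : ℝ) = 1 by push_cast; field_simp]
    exact Real.rpow_one C
  -- norm bound on products
  have hprod : ∀ (k : ℕ) (σ : Fin k → Fin m),
      opNorm ((List.ofFn fun j => A (σ j)).prod) ≤ γ ^ k * r := by
    intro k σ
    have hL : (List.ofFn fun j => A (σ j)) = (List.ofFn σ).map A := by
      rw [List.map_ofFn]; rfl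
    rw [hL]
    refine opNorm_le_of_sq _ _ (by positivity) fun x => ?_
    set P := ((List.ofFn σ).map A).prod with hP
    have hlen : ((List.ofFn σ).map A).length = k := by simp
    have h1 : s (P.mulVec x) ^ d ≤ ((γ ^ k * r) ^ 2 * s x) ^ d := by
      calc s (P.mulVec x) ^ d ≤ MvPolynomial.eval (P.mulVec x) p := hlow _
        _ ≤ (γ ^ (2 * d)) ^ (List.ofFn σ).length * MvPolynomial.eval x p := hiter _ x
        _ ≤ (γ ^ (2 * d)) ^ k * (C * s x ^ d) := by
            rw [List.length_ofFn]
            exact mul_le_mul_of_nonneg_left (hup' x) (pow_nonneg (pow_nonneg hγ _) _)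
        _ = ((γ ^ k * r) ^ 2 * s x) ^ d := by
            rw [← hrpow]
            ring
    have := le_of_pow_le_pow_left₀ (by omega : d ≠ 0)
      (mul_nonneg (sq_nonneg _) (hs0 x)) h1
    simpa [hs] using this
  -- bound on the sup sequence
  have hsup : ∀ k : ℕ, 1 ≤ k →
      (⨆ σ : Fin k → Fin m, opNorm ((List.ofFn fun j => A (σ j)).prod) ^ (1 / (k : ℝ)))
        ≤ γ * r ^ (1 / (k : ℝ)) := by
    intro k hk
    have hk0 : (k : ℝ) ≠ 0 := Nat.cast_ne_zero.mpr (by omega)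
    have hb : (0 : ℝ) ≤ γ * r ^ (1 / (k : ℝ)) :=
      mul_nonneg hγ (Real.rpow_nonneg hrpos.le _)
    refine Real.iSup_le (fun σ => ?_) hb
    have h1 : opNorm ((List.ofFn fun j => A (σ j)).prod) ^ (1 / (k : ℝ))
        ≤ (γ ^ k * r) ^ (1 / (k : ℝ)) :=
      Real.rpow_le_rpow (norm_nonneg _) (hprod k σ) (by positivity)
    refine h1.trans (le_of_eq ?_)
    rw [Real.mul_rpow (pow_nonneg hγ _) hrpos.le, ← Real.rpow_natCast γ k,
      ← Real.rpow_mul hγ]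
    rw [show (k : ℝ) * (1 / (k : ℝ)) = 1 by field_simp, Real.rpow_one]
  -- limsup argument
  have hf0 : ∀ k : ℕ, 0 ≤ ⨆ σ : Fin k → Fin m,
      opNorm ((List.ofFn fun j => A (σ j)).prod) ^ (1 / (k : ℝ)) := by
    intro k
    exact Real.iSup_nonneg fun σ => Real.rpow_nonneg (norm_nonneg _) _
  have htend : Filter.Tendsto (fun k : ℕ => γ * r ^ (1 / (k : ℝ))) Filter.atTop (𝓝 γ) := by
    have hcont : ContinuousAt (fun t : ℝ => r ^ t) 0 := Real.continuousAt_const_rpow hrpos.ne'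
    have h1 := (hcont.tendsto.comp tendsto_one_div_atTop_nhds_zero_nat).const_mul γ
    simpa using h1
  rw [jsr]
  by_contra hcon
  push_neg at hcon
  set L : ℝ := Filter.limsup
    (fun k : ℕ => ⨆ σ : Fin k → Fin m,
      opNorm ((List.ofFn fun j => A (σ j)).prod) ^ (1 / (k : ℝ)))
    Filter.atTop with hL
  have hεpos : γ < γ + (L - γ) / 2 := by linarith
  have hev : ∀ᶠ k in Filter.atTop, (⨆ σ : Fin k → Fin m,
      opNorm ((List.ofFn fun j => A (σ j)).prod) ^ (1 / (k : ℝ))) ≤ γ + (L - γ) / 2 := by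
    filter_upwards [htend.eventually_lt_const hεpos, Filter.eventually_ge_atTop 1] with k h1 h2
    exact (hsup k h2).trans h1.le
  have hle : L ≤ γ + (L - γ) / 2 :=
    Filter.limsup_le_of_le (Filter.isCoboundedUnder_le_of_le Filter.atTop hf0) hev
  linarith
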